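/- Let n ≥ 2, G = (Z/2)^n, s ∈ G nonzero, g1, g2 ∈ G with g1 ⊕ g2 ∉ {0, s}, and define a(x) as the Walsh–Hadamard amplitude (1/(2·√(2^n)))·((-1)^{g1·x} + (-1)^{(g1⊕s)·x} − (-1)^{g2·x} − (-1)^{(g2⊕s)·x}). Then every x ∈ G with a(x) ≠ 0 satisfies x ≠ 0 and s·x = 0; i.e., measuring the final state yields a nonzero member of the orthogonal subgroup H^⊥ = {x : s·x = 0}. -/
import Mathlib


open Finset

def dot {n : ℕ} (u v : Fin n → ZMod 2) : ZMod 2 := ∑ i, u i * v i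

noncomputable def sgn (b : ZMod 2) : ℝ := (-1 : ℝ) ^ b.val

noncomputable def amp {n : ℕ} (s g1 g2 x : Fin n → ZMod 2) : ℝ :=
  (1 / (2 * Real.sqrt (2 ^ n))) *
    (sgn (dot g1 x) + sgn (dot (g1 + s) x) - sgn (dot g2 x) - sgn (dot (g2 + s) x))

lemma dot_add_left {n : ℕ} (u v x : Fin n → ZMod 2) :
    dot (u + v) x = dot u x + dot v x := by
  simp [dot, add_mul, Finset.sum_add_distrib]

lemma sgn_add (a b : ZMod 2) : sgn (a + b) = sgn a * sgn b := by
  have h2 : ∀ c : ZMod 2, c = 0 ∨ c = 1 := by decide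
  rcases h2 a with rfl | rfl <;> rcases h2 b with rfl | rfl <;>
    norm_num [sgn, show ((1:ZMod 2)).val = 1 from rfl, show ((0:ZMod 2)).val = 0 from rfl,
      show ((2:ZMod 2)).val = 0 from rfl]

theorem stmt3 (n : ℕ) (hn : 2 ≤ n) (s g1 g2 : Fin n → ZMod 2)
    (hs : s ≠ 0) (hg : g1 + g2 ≠ 0) (hgs : g1 + g2 ≠ s) :
    ∀ x : Fin n → ZMod 2, amp s g1 g2 x ≠ 0 → x ≠ 0 ∧ dot s x = 0 := by
  intro x h
  constructor
  · rintro rfl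
    apply h
    simp [amp, dot, sgn]
  · by_contra hd
    apply h
    have h1 : dot s x = 1 := by
      rcases (by decide : ∀ c : ZMod 2, c = 0 ∨ c = 1) (dot s x) with h' | h' <;> simp_all
    have hsgn : sgn (dot s x) = -1 := by
      rw [h1]; simp [sgn, show ((1:ZMod 2)).val = 1 from rfl]
    simp only [amp, dot_add_left, sgn_add, hsgn]
    ring
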